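/- Let I be a closed two-sided ideal of a C*-algebra B and let I₁ ⊆ I₂ be closed two-sided ideals of B. Let A ⊆ B(H) with A ⊆_γ B, and suppose J₁, J₂ are closed ideals of A such that J_i ⊆_{γ'} I_i for γ' < 1/2 and for every x ∈ A, d(x, I_i) ≤ λγ‖x‖ implies d(x, J_i) ≤ μγ‖x‖ with μγ < 1 (for i = 1,2, with the appropriate constants). Then J₁ ⊆ J₂. -/

import Mathlib

open scoped ContinuousMapZero
set_option synthInstance.maxHeartbeats 1000000 in
set_option maxHeartbeats 2000000 in
theorem cfcn_mem {H : Type*} [NormedAddCommGroup H] [InnerProductSpace ℂ H] [CompleteSpace H]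
    (S : NonUnitalStarSubalgebra ℂ (H →L[ℂ] H)) (hS : IsClosed (S : Set (H →L[ℂ] H)))
    {x : H →L[ℂ] H} (hx : x ∈ S) (hsa : IsSelfAdjoint x)
    (f : ℝ → ℝ) (hf : Continuous f) (hf0 : f 0 = 0) :
    cfcₙ f x ∈ S := by
  rw [cfcₙ_apply f x hf.continuousOn hf0 hsa]
  generalize (⟨⟨_, _⟩, _⟩ : C(quasispectrum ℝ x, ℝ)₀) = F
  refine ContinuousMapZero.induction_on_of_compact (p := fun F => cfcₙHom hsa F ∈ S)
    ?_ ?_ ?_ ?_ ?_ ?_ ?_ _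
  · show cfcₙHom hsa 0 ∈ S
    rw [map_zero]; exact S.zero_mem
  · show cfcₙHom hsa (ContinuousMapZero.id (quasispectrum ℝ x)) ∈ S
    have hid : cfcₙHom hsa (ContinuousMapZero.id (quasispectrum ℝ x)) = x :=
      cfcₙHom_id (R := ℝ) hsa
    rw [hid]; exact hx
  · show cfcₙHom hsa (star (ContinuousMapZero.id (quasispectrum ℝ x))) ∈ S
    have hid : cfcₙHom hsa (ContinuousMapZero.id (quasispectrum ℝ x)) = x :=
      cfcₙHom_id (R := ℝ) hsa
    rw [map_star, hid]; exact star_mem hx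
  · intro f g hf hg
    show cfcₙHom hsa (f + g) ∈ S
    rw [map_add]; exact S.add_mem hf hg
  · intro f g hf hg
    show cfcₙHom hsa (f * g) ∈ S
    rw [map_mul]; exact S.mul_mem hf hg
  · intro r f hf
    show cfcₙHom hsa (r • f) ∈ S
    rw [map_smul, ← Complex.coe_smul]; exact S.smul_mem _ hf
  · intro f hf
    have hcl : IsClosed {G : C(quasispectrum ℝ x, ℝ)₀ | cfcₙHom hsa G ∈ S} :=
      hS.preimage (cfcₙHom_isClosedEmbedding hsa).continuous
    exact hcl.closure_subset (mem_closure_iff_frequently.mpr hf)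

theorem cutoff_props {H : Type*} [NormedAddCommGroup H] [InnerProductSpace ℂ H] [CompleteSpace H]
    {x : H →L[ℂ] H} (hsa : IsSelfAdjoint x) {ε : ℝ} (hε : 0 < ε) :
    ‖cfcₙ (fun t : ℝ => min (|t|/ε) 1) x‖ ≤ 1 ∧
    ‖cfcₙ (fun t : ℝ => min (|t|/ε) 1) x * x - x‖ ≤ ε := by
  set g : ℝ → ℝ := fun t => min (|t|/ε) 1 with hgdef
  have hg : Continuous g := Continuous.min (continuous_abs.div_const ε) continuous_const
  have hg0 : g 0 = 0 := by simp [hgdef, hε.ne']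
  have hgt : Continuous (fun t : ℝ => g t * t) := hg.mul continuous_id
  have key : cfcₙ g x * x - x = cfcₙ (fun t : ℝ => g t * t - t) x := by
    rw [cfcₙ_sub (fun t : ℝ => g t * t) (fun t : ℝ => t) x (hf := hgt.continuousOn)
      (hg := continuous_id.continuousOn),
      cfcₙ_mul g (fun t : ℝ => t) x (hf := hg.continuousOn) (hg := continuous_id.continuousOn),
      cfcₙ_id' ℝ x]
  constructor
  · refine norm_cfcₙ_le fun t _ => ?_
    rw [Real.norm_eq_abs, abs_of_nonneg (le_min (by positivity) zero_le_one)]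
    exact min_le_right _ _
  · rw [key]
    refine norm_cfcₙ_le fun t _ => ?_
    rw [Real.norm_eq_abs]
    rcases le_or_gt (|t|) ε with h | h
    · have hg1 : g t ≤ 1 := min_le_right _ _
      have hg2 : 0 ≤ g t := le_min (by positivity) zero_le_one
      have heq : |g t * t - t| = |t| * |1 - g t| := by
        rw [show g t * t - t = -(t * (1 - g t)) by ring, abs_neg, abs_mul]
      rw [heq]
      have hb : |1 - g t| ≤ 1 := by rw [abs_of_nonneg (by linarith)]; linarith
      calc |t| * |1 - g t| ≤ |t| * 1 := mul_le_mul_of_nonneg_left hb (abs_nonneg t)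
        _ ≤ ε := by simpa using h
    · have : g t = 1 := min_eq_right (by rw [le_div_iff₀ hε]; simpa using h.le)
      simp [this, hε.le]



/-- Transfer of nested ideals through a near inclusion: if `A ⊆_γ B`, `I₁ ⊆ I₂` are closed
ideals of `B`, and `J₁, J₂` are closed ideals of `A` with `J_i ⊆_{γ'} I_i` (`γ' < 1/2`,
with `γ' ≤ λγ`) such that for every `x ∈ A`, `d(x, I_i) ≤ λγ‖x‖` implies
`d(x, J_i) ≤ μγ‖x‖` where `μγ < 1`, then `J₁ ⊆ J₂`. -/
theorem stmt_19 {H : Type*} [NormedAddCommGroup H] [InnerProductSpace ℂ H] [CompleteSpace H]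
    (A B I₁ I₂ J₁ J₂ : NonUnitalStarSubalgebra ℂ (H →L[ℂ] H))
    (hAcl : IsClosed (A : Set (H →L[ℂ] H))) (hBcl : IsClosed (B : Set (H →L[ℂ] H)))
    (hI₁cl : IsClosed (I₁ : Set (H →L[ℂ] H))) (hI₂cl : IsClosed (I₂ : Set (H →L[ℂ] H)))
    (hJ₁cl : IsClosed (J₁ : Set (H →L[ℂ] H))) (hJ₂cl : IsClosed (J₂ : Set (H →L[ℂ] H)))
    -- `I₁ ⊆ I₂` are two-sided ideals of `B`
    (hI₁B : I₁ ≤ B) (hI₂B : I₂ ≤ B) (hI₁₂ : I₁ ≤ I₂)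
    (hI₁ideal : ∀ b ∈ B, ∀ x ∈ I₁, b * x ∈ I₁ ∧ x * b ∈ I₁)
    (hI₂ideal : ∀ b ∈ B, ∀ x ∈ I₂, b * x ∈ I₂ ∧ x * b ∈ I₂)
    -- `J₁, J₂` are two-sided ideals of `A`
    (hJ₁A : J₁ ≤ A) (hJ₂A : J₂ ≤ A)
    (hJ₁ideal : ∀ a ∈ A, ∀ x ∈ J₁, a * x ∈ J₁ ∧ x * a ∈ J₁)
    (hJ₂ideal : ∀ a ∈ A, ∀ x ∈ J₂, a * x ∈ J₂ ∧ x * a ∈ J₂)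
    -- constants
    (γ γ' lam μ : ℝ) (hγ : 0 ≤ γ) (hγ' : 0 ≤ γ') (hγ'2 : γ' < 1 / 2)
    (hγ'lam : γ' ≤ lam * γ) (hμγ : μ * γ < 1)
    -- near inclusions
    (hAB : ∀ a ∈ A, ∃ b ∈ B, ‖a - b‖ ≤ γ * ‖a‖)
    (hJ₁I₁ : ∀ x ∈ J₁, ∃ y ∈ I₁, ‖x - y‖ ≤ γ' * ‖x‖)
    (hJ₂I₂ : ∀ x ∈ J₂, ∃ y ∈ I₂, ‖x - y‖ ≤ γ' * ‖x‖)
    -- distance transfer hypotheses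
    (htrans₁ : ∀ x ∈ A, Metric.infDist x (I₁ : Set (H →L[ℂ] H)) ≤ lam * γ * ‖x‖ →
      Metric.infDist x (J₁ : Set (H →L[ℂ] H)) ≤ μ * γ * ‖x‖)
    (htrans₂ : ∀ x ∈ A, Metric.infDist x (I₂ : Set (H →L[ℂ] H)) ≤ lam * γ * ‖x‖ →
      Metric.infDist x (J₂ : Set (H →L[ℂ] H)) ≤ μ * γ * ‖x‖) :
    J₁ ≤ J₂ := by
  have hJ₂ne : (J₂ : Set (H →L[ℂ] H)).Nonempty := ⟨0, J₂.zero_mem⟩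
  set c := μ * γ with hcdef
  -- Step 1: near inclusion of `J₁` in `J₂` with constant `c < 1`.
  have hc : ∀ x ∈ J₁, Metric.infDist x (J₂ : Set (H →L[ℂ] H)) ≤ c * ‖x‖ := by
    intro x hx
    refine htrans₂ x (hJ₁A hx) ?_
    obtain ⟨y, hy, hxy⟩ := hJ₁I₁ x hx
    have h1 : Metric.infDist x (I₂ : Set (H →L[ℂ] H)) ≤ ‖x - y‖ := by
      simpa [dist_eq_norm] using Metric.infDist_le_dist_of_mem (hI₁₂ hy)
    exact h1.trans (hxy.trans (mul_le_mul_of_nonneg_right hγ'lam (norm_nonneg x)))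
  -- Step 2: self-adjoint elements of `J₁` belong to `J₂`.
  have hsa_case : ∀ x ∈ J₁, IsSelfAdjoint x → x ∈ J₂ := by
    intro x hxJ hsa
    set D := Metric.infDist x (J₂ : Set (H →L[ℂ] H)) with hD
    have hD0 : 0 ≤ D := Metric.infDist_nonneg
    suffices hD_zero : D = 0 by
      have : x ∈ closure (J₂ : Set (H →L[ℂ] H)) :=
        (Metric.mem_closure_iff_infDist_zero hJ₂ne).mpr hD_zero
      rwa [hJ₂cl.closure_eq] at this
    rcases le_or_gt c 0 with hcneg | hcpos
    · have h1 := hc x hxJ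
      have h2 : c * ‖x‖ ≤ 0 := mul_nonpos_of_nonpos_of_nonneg hcneg (norm_nonneg x)
      linarith
    have key : ∀ δ : ℝ, 0 < δ → D ≤ c * (D + 2 * δ) := by
      intro δ hδ
      obtain ⟨k, hk, hkd⟩ : ∃ k ∈ (J₂ : Set (H →L[ℂ] H)), dist x k < D + δ := by
        rw [← Metric.infDist_lt_iff hJ₂ne]; rw [← hD]; linarith
      set u := cfcₙ (fun t : ℝ => min (|t|/δ) 1) x with hu
      obtain ⟨hu1, hu2⟩ := cutoff_props hsa hδ
      have huJ₁ : u ∈ J₁ :=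
        cfcn_mem J₁ hJ₁cl hxJ hsa _
          (Continuous.min (continuous_abs.div_const δ) continuous_const) (by simp [hδ.ne'])
      have hukJ₁ : u * k ∈ J₁ := (hJ₁ideal k (hJ₂A hk) u huJ₁).2
      have hukJ₂ : u * k ∈ J₂ := (hJ₂ideal u (hJ₁A huJ₁) k hk).1
      have hxn : ‖x - u * k‖ ≤ D + 2 * δ := by
        have hsplit : x - u * k = -(u * x - x) + u * (x - k) := by
          rw [mul_sub]; abel
        rw [hsplit]
        calc ‖-(u * x - x) + u * (x - k)‖ ≤ ‖-(u * x - x)‖ + ‖u * (x - k)‖ := norm_add_le _ _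
          _ ≤ ‖u * x - x‖ + ‖u‖ * ‖x - k‖ := by
              rw [norm_neg]; exact add_le_add le_rfl (norm_mul_le _ _)
          _ ≤ δ + 1 * (D + δ) := by
              refine add_le_add hu2 ?_
              refine mul_le_mul hu1 ?_ (norm_nonneg _) zero_le_one
              rw [← dist_eq_norm]; exact hkd.le
          _ = D + 2 * δ := by ring
      -- translate by `u * k ∈ J₂` and apply the near inclusion
      have h1 : D ≤ Metric.infDist (x - u * k) (J₂ : Set (H →L[ℂ] H)) := by
        have hiso : Isometry (fun y : H →L[ℂ] H => y - u * k) :=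
          Isometry.of_dist_eq fun a b => by
            simp [dist_eq_norm, sub_sub_sub_cancel_right]
        have himg : (fun y : H →L[ℂ] H => y - u * k) '' (J₂ : Set (H →L[ℂ] H))
            = (J₂ : Set (H →L[ℂ] H)) := by
          ext z
          constructor
          · rintro ⟨w, hw, rfl⟩; exact J₂.sub_mem hw hukJ₂
          · intro hz; exact ⟨z + u * k, J₂.add_mem hz hukJ₂, add_sub_cancel_right z (u * k)⟩
        calc D = Metric.infDist ((fun y : H →L[ℂ] H => y - u * k) x)
              ((fun y : H →L[ℂ] H => y - u * k) '' (J₂ : Set (H →L[ℂ] H))) :=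
              (Metric.infDist_image hiso).symm
          _ = Metric.infDist (x - u * k) (J₂ : Set (H →L[ℂ] H)) := by rw [himg]
          _ ≤ Metric.infDist (x - u * k) (J₂ : Set (H →L[ℂ] H)) := le_rfl
      have h2 : Metric.infDist (x - u * k) (J₂ : Set (H →L[ℂ] H)) ≤ c * ‖x - u * k‖ :=
        hc _ (J₁.sub_mem hxJ hukJ₁)
      calc D ≤ c * ‖x - u * k‖ := h1.trans h2
        _ ≤ c * (D + 2 * δ) := mul_le_mul_of_nonneg_left hxn hcpos.le
    have hDcD : D ≤ c * D := by
      by_contra hlt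
      push_neg at hlt
      have hδpos : 0 < (D - c * D) / (4 * c) := div_pos (by linarith) (by linarith)
      have hkey := key _ hδpos
      have heq : c * (2 * ((D - c * D) / (4 * c))) = (D - c * D) / 2 := by
        field_simp; ring
      rw [mul_add, heq] at hkey
      linarith
    nlinarith [hD0, hμγ, hDcD]
  -- Step 3: decompose a general element into self-adjoint parts.
  intro x hx
  have hxs : star x ∈ J₁ := star_mem hx
  set a := (2⁻¹ : ℂ) • (x + star x) with ha
  set b := (-(Complex.I / 2)) • (x - star x) with hb
  have haJ : a ∈ J₁ := J₁.smul_mem _ (J₁.add_mem hx hxs)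
  have hbJ : b ∈ J₁ := J₁.smul_mem _ (J₁.sub_mem hx hxs)
  have hsa_a : IsSelfAdjoint a := by
    rw [IsSelfAdjoint, ha, star_smul, star_add, star_star,
      show star (2⁻¹ : ℂ) = 2⁻¹ by simp, add_comm]
  have hsa_b : IsSelfAdjoint b := by
    rw [IsSelfAdjoint, hb, star_smul, star_sub, star_star,
      show star (-(Complex.I / 2)) = Complex.I / 2 by simp [Complex.star_def, div_eq_mul_inv]]
    module
  have hxab : x = a + Complex.I • b := by
    rw [ha, hb, smul_smul]
    rw [show Complex.I * -(Complex.I / 2) = (2⁻¹ : ℂ) by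
      rw [show Complex.I * -(Complex.I / 2) = -(Complex.I * Complex.I) / 2 by ring,
        Complex.I_mul_I]; norm_num]
    module
  have haJ₂ : a ∈ J₂ := hsa_case a haJ hsa_a
  have hbJ₂ : b ∈ J₂ := hsa_case b hbJ hsa_b
  rw [hxab]
  exact J₂.add_mem haJ₂ (J₂.smul_mem _ hbJ₂)
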